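/- The sequence u(n) = (−1)^{v_2(n)+v_3(n)} (for n ≥ 1) has subword complexity p_u(n) = Ω(n²); in particular p_u(n) ≥ ⌈(n+1)²/6⌉ for lengths of the form max{3n−2, r+2n−1}. -/

import Mathlib

/-- The subword complexity of a sequence: the number of distinct factors of length `n`. -/
noncomputable def subwordComplexity {α : Type*} (u : ℕ → α) (n : ℕ) : ℕ :=
  (Set.range fun start => fun i : Fin n => u (start + (i : ℕ))).ncard

/-- A sequence is ultimately periodic. -/
def UltimatelyPeriodic {α : Type*} (u : ℕ → α) : Prop :=
  ∃ N T : ℕ, 0 < T ∧ ∀ n ≥ N, u (n + T) = u n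

/-- A sequence is `k`-automatic iff its `k`-kernel is finite. -/
def IsAutomatic {α : Type*} (k : ℕ) (u : ℕ → α) : Prop :=
  {v : ℕ → α | ∃ e r : ℕ, r < k ^ e ∧ v = fun n => u (k ^ e * n + r)}.Finite

def BigO (f g : ℕ → ℕ) : Prop := ∃ C N : ℕ, ∀ n ≥ N, f n ≤ C * g n

def BigOmega (f g : ℕ → ℕ) : Prop := ∃ c N : ℕ, 0 < c ∧ ∀ n ≥ N, g n ≤ c * f n

def BigTheta (f g : ℕ → ℕ) : Prop := BigO f g ∧ BigOmega f g



/-! Valuation helpers -/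

lemma swValEq {p k n : ℕ} (hp : p.Prime) (hn : n ≠ 0) (h1 : p ^ k ∣ n)
    (h2 : ¬ p ^ (k+1) ∣ n) : padicValNat p n = k := by
  have e := Nat.factorization_def n hp
  have l1 : k ≤ n.factorization p := (Nat.Prime.pow_dvd_iff_le_factorization hp hn).mp h1
  have l2 : ¬ (k+1 ≤ n.factorization p) := fun h =>
    h2 ((Nat.Prime.pow_dvd_iff_le_factorization hp hn).mpr h)
  omega

lemma swValTransfer {p c n d : ℕ} (hp : p.Prime) (hd : p ^ c ∣ d) (hn : n ≠ 0)
    (h : padicValNat p n < c) : padicValNat p (n + d) = padicValNat p n := by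
  have : Fact p.Prime := ⟨hp⟩
  refine swValEq hp (by omega) ?_ ?_
  · exact dvd_add pow_padicValNat_dvd
      ((pow_dvd_pow p (by omega : padicValNat p n ≤ c)).trans hd)
  · intro hdd
    have h1 : p ^ (padicValNat p n + 1) ∣ d := (pow_dvd_pow p (by omega)).trans hd
    have h2 : p ^ (padicValNat p n + 1) ∣ n := by
      have := Nat.dvd_sub hdd h1
      simpa using this
    exact pow_succ_padicValNat_not_dvd hn h2

lemma swValOfMod {p k n : ℕ} (hp : p.Prime) (h : n % p^(k+1) = p^k % p^(k+1)) :
    padicValNat p n = k ∧ p ^ k ∣ n ∧ ¬ p^(k+1) ∣ n := by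
  have hlt : p ^ k < p ^ (k+1) := Nat.pow_lt_pow_succ hp.one_lt
  have hpk : 0 < p ^ k := pow_pos hp.pos k
  rw [Nat.mod_eq_of_lt hlt] at h
  have e : n = p^(k+1) * (n / p^(k+1)) + p^k := by
    conv_lhs => rw [← Nat.div_add_mod n (p^(k+1))]
    rw [h]
  have hn : n ≠ 0 := by omega
  have hd : p ^ k ∣ n := by
    rw [e]; exact dvd_add (Dvd.dvd.mul_right (pow_dvd_pow p k.le_succ) _) dvd_rfl
  have hnd : ¬ p^(k+1) ∣ n := by
    intro hh
    have hsub : n - p^(k+1) * (n / p^(k+1)) = p^k := by omega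
    have h3 : p^(k+1) ∣ p^k := by
      have := Nat.dvd_sub hh (dvd_mul_right (p^(k+1)) (n / p^(k+1)))
      rwa [hsub] at this
    exact absurd (Nat.le_of_dvd hpk h3) (by omega)
  exact ⟨swValEq hp hn hd hnd, hd, hnd⟩

lemma swVpMulP {p m : ℕ} (hp : p.Prime) (hm : m ≠ 0) :
    padicValNat p (p * m) = padicValNat p m + 1 := by
  have : Fact p.Prime := ⟨hp⟩
  refine swValEq hp (mul_ne_zero hp.ne_zero hm) ?_ ?_
  · rw [pow_succ']
    exact mul_dvd_mul_left p pow_padicValNat_dvd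
  · rw [pow_succ']
    intro hh
    exact pow_succ_padicValNat_not_dvd hm ((Nat.mul_dvd_mul_iff_left hp.pos).mp hh)

lemma swVpMulCop {p q m : ℕ} (hp : p.Prime) (hq : ¬ p ∣ q) (hm : m ≠ 0) (hq0 : q ≠ 0) :
    padicValNat p (q * m) = padicValNat p m := by
  have : Fact p.Prime := ⟨hp⟩
  refine swValEq hp (mul_ne_zero hq0 hm) ?_ ?_
  · exact pow_padicValNat_dvd.trans (dvd_mul_left m q)
  · intro hh
    have hco : Nat.Coprime (p^(padicValNat p m + 1)) q :=
      Nat.Coprime.pow_left _ ((Nat.Prime.coprime_iff_not_dvd hp).mpr hq)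
    exact pow_succ_padicValNat_not_dvd hm (hco.dvd_of_dvd_mul_left hh)
/-! Existence of congruent elements in a window -/

lemma swExistsCong (s M r : ℕ) (hM : 0 < M) :
    ∃ n, s < n ∧ n ≤ s + M ∧ n % M = r % M := by
  have hc : (s+1) % M < M := Nat.mod_lt _ hM
  set c := (s+1) % M with hcdef
  set o := (r % M + M - c) % M with hodef
  have ho : o < M := Nat.mod_lt _ hM
  have hrm : r % M < M := Nat.mod_lt _ hM
  refine ⟨s + 1 + o, by omega, by omega, ?_⟩
  have key : s+1+o ≡ r [MOD M] := by
    calc s+1+o ≡ c + o [MOD M] := Nat.ModEq.add_right o (Nat.mod_modEq _ M).symm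
      _ ≡ c + (r % M + M - c) [MOD M] := Nat.ModEq.add_left c (Nat.mod_modEq _ M)
      _ = r % M + M := by omega
      _ ≡ r % M [MOD M] := by simp [Nat.ModEq, Nat.add_mod_right]
      _ ≡ r [MOD M] := Nat.mod_modEq _ _
  exact key

lemma swExistsCong2 (s M1 M2 c1 c2 d : ℕ) (h1 : 0 < M1) (h2 : 0 < M2)
    (co : Nat.Coprime M1 M2) :
    ∃ n, s < n ∧ n ≤ s + M1 * M2 ∧ (n + d) % M1 = c1 % M1 ∧ n % M2 = c2 % M2 := by
  obtain ⟨z, hz1, hz2⟩ := Nat.chineseRemainder co (c1 + (M1 - d % M1)) c2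
  obtain ⟨n, hn1, hn2, hn3⟩ := swExistsCong s (M1*M2) z (by positivity)
  have hn3' : n ≡ z [MOD M1 * M2] := hn3
  refine ⟨n, hn1, hn2, ?_, ?_⟩
  · have e1 : n ≡ c1 + (M1 - d % M1) [MOD M1] := (hn3'.of_mul_right M2).trans hz1
    have e2 : n + d ≡ c1 + (M1 - d % M1) + d [MOD M1] := e1.add_right d
    have hdm := Nat.div_add_mod d M1
    have hdl : d % M1 < M1 := Nat.mod_lt _ h1
    have e3 : c1 + (M1 - d % M1) + d = c1 + M1 * (1 + d / M1) := by
      have : M1 * (1 + d / M1) = M1 + M1 * (d / M1) := by ring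
      omega
    have e4 : (c1 + M1 * (1 + d / M1)) % M1 = c1 % M1 := by
      rw [Nat.mul_comm]
      exact Nat.add_mul_mod_self_right c1 (1 + d / M1) M1
    calc (n + d) % M1 = (c1 + (M1 - d % M1) + d) % M1 := e2
      _ = c1 % M1 := by rw [e3, e4]
  · exact (hn3'.of_mul_left M1).trans hz2
/-! The parity hypothesis coming from two equal windows -/

def swHyp (s d m : ℕ) : Prop :=
  ∀ n, s < n → n ≤ s + m →
    (padicValNat 2 n + padicValNat 3 n) % 2
      = (padicValNat 2 (n + d) + padicValNat 3 (n + d)) % 2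

lemma swHyp.mono {s d m m' : ℕ} (H : swHyp s d m) (h : m' ≤ m) : swHyp s d m' :=
  fun n h1 h2 => H n h1 (by omega)

/-- From scratch: `2 ∣ d`. -/
lemma swTwoDvd {s d m : ℕ} (H : swHyp s d m) (hm : 12 ≤ m) : 2 ∣ d := by
  by_contra h2
  have hd2 : d % 2 = 1 := by omega
  set c : ℕ := if d % 3 = 2 then 2 else 1 with hc
  obtain ⟨n, hn1, hn2, hn3, hn4⟩ := swExistsCong2 s 4 3 2 c 0
    (by norm_num) (by norm_num) (by norm_num)
  simp only [Nat.add_zero] at hn3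
  have hn4' : n % 3 = c := by
    have : c % 3 = c := by rcases eq_or_ne (d % 3) 2 with h | h <;> simp [hc, h]
    omega
  have hmod : n % 4 = 2 := by omega
  have hv2n : padicValNat 2 n = 1 :=
    swValEq Nat.prime_two (by omega) (by omega) (by omega)
  have hv2n' : padicValNat 2 (n + d) = 0 :=
    padicValNat.eq_zero_of_not_dvd (by omega)
  have hv3n : padicValNat 3 n = 0 :=
    padicValNat.eq_zero_of_not_dvd (by rcases eq_or_ne (d % 3) 2 with h | h <;> simp [hc, h] at hn4' <;> omega)
  have hv3n' : padicValNat 3 (n + d) = 0 :=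
    padicValNat.eq_zero_of_not_dvd (by rcases eq_or_ne (d % 3) 2 with h | h <;> simp [hc, h] at hn4' <;> omega)
  have := H n hn1 (by omega)
  rw [hv2n, hv2n', hv3n, hv3n'] at this
  omega

/-- Step lemma for powers of two. -/
lemma swA2 {s d m : ℕ} (H : swHyp s d m) (k : ℕ) (h3 : 3 ∣ d) (hb : 2^k ∣ d)
    (hm : 6 * 2^(k+1) ≤ m) : 2^(k+1) ∣ d := by
  by_contra htop
  have hco : Nat.Coprime (2^(k+2)) 3 := Nat.Coprime.pow_left _ (by norm_num)
  obtain ⟨n, hn1, hn2, hn3, hn4⟩ := swExistsCong2 s (2^(k+2)) 3 (2^(k+1)) 1 d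
    (by positivity) (by norm_num) hco
  have hsize : (2:ℕ)^(k+2) * 3 = 6 * 2^(k+1) := by ring
  have hwin : n ≤ s + m := by omega
  obtain ⟨hvn', hd1, hd2⟩ := swValOfMod Nat.prime_two (n := n + d) (k := k+1) hn3
  have hnz : n ≠ 0 := by omega
  have hd3 : 2^k ∣ n := by
    have h4 : (2:ℕ)^k ∣ n + d := (pow_dvd_pow 2 k.le_succ).trans hd1
    have := Nat.dvd_sub h4 hb
    simpa using this
  have hd4 : ¬ 2^(k+1) ∣ n := fun hh => htop (by simpa using Nat.dvd_sub hd1 hh)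
  have hvn : padicValNat 2 n = k := swValEq Nat.prime_two hnz hd3 hd4
  have hv3n : padicValNat 3 n = 0 := padicValNat.eq_zero_of_not_dvd (by omega)
  have hv3n' : padicValNat 3 (n + d) = 0 := padicValNat.eq_zero_of_not_dvd (by omega)
  have := H n hn1 hwin
  rw [hvn, hvn', hv3n, hv3n'] at this
  omega

/-- Step lemma for powers of three. -/
lemma swA3 {s d m : ℕ} (H : swHyp s d m) (k : ℕ) (h2 : 2 ∣ d) (hb : 3^k ∣ d)
    (hm : 6 * 3^(k+1) ≤ m) : 3^(k+1) ∣ d := by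
  by_contra htop
  have hco : Nat.Coprime (3^(k+2)) 2 := Nat.Coprime.pow_left _ (by norm_num)
  obtain ⟨n, hn1, hn2, hn3, hn4⟩ := swExistsCong2 s (3^(k+2)) 2 (3^(k+1)) 1 d
    (by positivity) (by norm_num) hco
  have hsize : (3:ℕ)^(k+2) * 2 = 6 * 3^(k+1) := by ring
  have hwin : n ≤ s + m := by omega
  obtain ⟨hvn', hd1, hd2⟩ := swValOfMod Nat.prime_three (n := n + d) (k := k+1) hn3
  have hnz : n ≠ 0 := by omega
  have hd3 : 3^k ∣ n := by
    have h4 : (3:ℕ)^k ∣ n + d := (pow_dvd_pow 3 k.le_succ).trans hd1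
    have := Nat.dvd_sub h4 hb
    simpa using this
  have hd4 : ¬ 3^(k+1) ∣ n := fun hh => htop (by simpa using Nat.dvd_sub hd1 hh)
  have hvn : padicValNat 3 n = k := swValEq Nat.prime_three hnz hd3 hd4
  have hv2n : padicValNat 2 n = 0 := padicValNat.eq_zero_of_not_dvd (by omega)
  have hv2n' : padicValNat 2 (n + d) = 0 := padicValNat.eq_zero_of_not_dvd (by omega)
  have := H n hn1 hwin
  rw [hvn, hvn', hv2n, hv2n'] at this
  omega

lemma swTwoPowDvd {s d m : ℕ} (H : swHyp s d m) : ∀ k, 6 * 2^k ≤ m → 2^k ∣ d := by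
  intro k
  induction k with
  | zero => simp
  | succ k ih =>
    intro hm
    have hgrow : (2:ℕ)^k ≤ 2^(k+1) := Nat.pow_le_pow_right (by norm_num) (by omega)
    have hdk : 2^k ∣ d := ih (by omega)
    match k, hdk with
    | 0, _ =>
      have := swTwoDvd H (by norm_num at hm ⊢; omega)
      simpa using this
    | (k'+1), hdk =>
      have h2 : 2 ∣ d := by
        have : (2:ℕ)^1 ∣ 2^(k'+1) := pow_dvd_pow 2 (by omega)
        simpa using this.trans hdk
      have h18 : (4:ℕ) ≤ 2^(k'+2) := by
        calc (4:ℕ) = 2^2 := by norm_num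
        _ ≤ 2^(k'+2) := Nat.pow_le_pow_right (by norm_num) (by omega)
      have h3 : 3 ∣ d := by
        have := swA3 H 0 h2 (one_dvd d) (by norm_num; omega)
        simpa using this
      exact swA2 H (k'+1) h3 hdk hm

lemma swThreePowDvd {s d m : ℕ} (H : swHyp s d m) : ∀ k, 6 * 3^k ≤ m → 3^k ∣ d := by
  intro k
  induction k with
  | zero => simp
  | succ k ih =>
    intro hm
    have hgrow : (3:ℕ)^k ≤ 3^(k+1) := Nat.pow_le_pow_right (by norm_num) (by omega)
    have hpos : (1:ℕ) ≤ 3^(k+1) := Nat.one_le_pow _ _ (by norm_num)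
    have h2 : 2 ∣ d := swTwoDvd H (by omega)
    exact swA3 H k h2 (ih (by omega)) hm
/-! Forcing lemma -/

lemma swForced {q j x d A A' : ℕ} (hq : q.Prime) (h3 : q^j ∣ d) (hx : x ≠ 0)
    (hpar : (A + padicValNat q x) % 2 = (A' + padicValNat q (x + d)) % 2)
    (hv : A + 1 = A' ∨ A' + 1 = A) : q^j ∣ x := by
  by_contra h
  have hlt : padicValNat q x < j := by
    by_contra hge
    exact h ((pow_dvd_pow q (by omega)).trans pow_padicValNat_dvd)
  have := swValTransfer hq h3 hx hlt
  omega

/-- Tight upgrade for the power of two. -/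
lemma swU2 {s d : ℕ} (a j : ℕ) (H : swHyp s d (3 * 2^(a+1))) (hj : 2 ≤ j)
    (h2 : 2^a ∣ d) (h3 : 3^j ∣ d) : 2^(a+1) ∣ d := by
  by_contra htop
  have hsize : (2:ℕ)^(a+2) = 2 * 2^(a+1) := by ring
  have hs2 : (2:ℕ)^(a+1) = 2 * 2^a := by ring
  have hP : (0:ℕ) < 2^a := by positivity
  obtain ⟨x, hx1, hx2, hx3, -⟩ := swExistsCong2 s (2^(a+2)) 1 (2^(a+1)) 0 d
    (by positivity) (by norm_num) (Nat.coprime_one_right _)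
  rw [Nat.mul_one] at hx2
  obtain ⟨hvx', hdx1, hdx2⟩ := swValOfMod Nat.prime_two (n := x + d) (k := a+1) hx3
  have hxz : x ≠ 0 := by omega
  have hdx3 : 2^a ∣ x := by
    have h4 : (2:ℕ)^a ∣ x + d := (pow_dvd_pow 2 a.le_succ).trans hdx1
    have := Nat.dvd_sub h4 h2
    simpa using this
  have hdx4 : ¬ 2^(a+1) ∣ x := fun hh => htop (by simpa using Nat.dvd_sub hdx1 hh)
  have hvx : padicValNat 2 x = a := swValEq Nat.prime_two hxz hdx3 hdx4
  have hx3j : 3^j ∣ x :=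
    swForced (A := padicValNat 2 x) (A' := padicValNat 2 (x+d)) Nat.prime_three h3 hxz
      (H x hx1 (by omega)) (by omega)
  obtain ⟨y, hy1, hy2, hy3, -⟩ := swExistsCong2 s (2^(a+2)) 1 (2^(a+1)) 0 0
    (by positivity) (by norm_num) (Nat.coprime_one_right _)
  rw [Nat.mul_one] at hy2
  rw [Nat.add_zero] at hy3
  obtain ⟨hvy, hdy1, hdy2⟩ := swValOfMod Nat.prime_two (n := y) (k := a+1) hy3
  have hyz : y ≠ 0 := by omega
  have hdy3 : 2^a ∣ y + d := dvd_add ((pow_dvd_pow 2 a.le_succ).trans hdy1) h2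
  have hdy4 : ¬ 2^(a+1) ∣ y + d := fun hh => htop (by simpa using Nat.dvd_sub hh hdy1)
  have hvy' : padicValNat 2 (y + d) = a := swValEq Nat.prime_two (by omega) hdy3 hdy4
  have hy3j : 3^j ∣ y :=
    swForced (A := padicValNat 2 y) (A' := padicValNat 2 (y+d)) Nat.prime_three h3 hyz
      (H y hy1 (by omega)) (by omega)
  have hne : x ≠ y := by
    intro he
    rw [he, hvy] at hvx
    omega
  have hco : Nat.Coprime (2^a) (3^j) := Nat.Coprime.pow a j (by norm_num)
  have h9 : (9:ℕ) ≤ 3^j := by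
    calc (9:ℕ) = 3^2 := by norm_num
    _ ≤ 3^j := Nat.pow_le_pow_right (by norm_num) hj
  have hmul : 9 * 2^a ≤ 2^a * 3^j := by
    calc 9 * 2^a ≤ 3^j * 2^a := Nat.mul_le_mul_right _ h9
    _ = 2^a * 3^j := by ring
  rcases Nat.lt_or_ge x y with hlt | hge
  · have hDd : 2^a * 3^j ∣ y - x := hco.mul_dvd_of_dvd_of_dvd
      (Nat.dvd_sub ((pow_dvd_pow 2 a.le_succ).trans hdy1) hdx3) (Nat.dvd_sub hy3j hx3j)
    have hDle := Nat.le_of_dvd (by omega) hDd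
    omega
  · have hlt' : y < x := by omega
    have hDd : 2^a * 3^j ∣ x - y := hco.mul_dvd_of_dvd_of_dvd
      (Nat.dvd_sub hdx3 ((pow_dvd_pow 2 a.le_succ).trans hdy1)) (Nat.dvd_sub hx3j hy3j)
    have hDle := Nat.le_of_dvd (by omega) hDd
    omega

/-- Tight upgrade for the power of three. -/
lemma swU3 {s d : ℕ} (a j : ℕ) (H : swHyp s d (2 * 3^(j+1) + 4)) (ha : 3 ≤ a) (hj : 1 ≤ j)
    (h2 : 2^a ∣ d) (h3 : 3^j ∣ d) : 3^(j+1) ∣ d := by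
  by_contra htop
  have hs1 : (3:ℕ)^(j+1) = 3 * 3^j := by ring
  have hs2 : (3:ℕ)^(j+2) = 3 * 3^(j+1) := by ring
  have hPj : (0:ℕ) < 3^j := by positivity
  have h8 : (8:ℕ) ≤ 2^a := by
    calc (8:ℕ) = 2^3 := by norm_num
    _ ≤ 2^a := Nat.pow_le_pow_right (by norm_num) ha
  -- pick y with 3^(j+1) ∣ y but ¬ 3^(j+2) ∣ y
  obtain ⟨y1, hy11, hy12, hy13, -⟩ := swExistsCong2 s (3^(j+1)) 1 0 0 0
    (by positivity) (by norm_num) (Nat.coprime_one_right _)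
  rw [Nat.mul_one] at hy12
  rw [Nat.add_zero] at hy13
  have hy1d : 3^(j+1) ∣ y1 := Nat.dvd_of_mod_eq_zero (by simpa using hy13)
  obtain ⟨y, hyw1, hyw2, hyd1, hyd2⟩ :
      ∃ y, s < y ∧ y ≤ s + 2 * 3^(j+1) ∧ 3^(j+1) ∣ y ∧ ¬ 3^(j+2) ∣ y := by
    by_cases hc : 3^(j+2) ∣ y1
    · refine ⟨y1 + 3^(j+1), by omega, by omega, dvd_add hy1d dvd_rfl, ?_⟩
      intro hh
      have h4 : (3:ℕ)^(j+2) ∣ 3^(j+1) := by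
        have := Nat.dvd_sub hh hc
        simpa using this
      have := Nat.le_of_dvd (by positivity) h4
      omega
    · exact ⟨y1, hy11, by omega, hy1d, hc⟩
  have hyz : y ≠ 0 := by omega
  have hvy : padicValNat 3 y = j+1 := swValEq Nat.prime_three hyz hyd1 hyd2
  have hyd3 : 3^j ∣ y + d := dvd_add ((pow_dvd_pow 3 j.le_succ).trans hyd1) h3
  have hyd4 : ¬ 3^(j+1) ∣ y + d := fun hh => htop (by simpa using Nat.dvd_sub hh hyd1)
  have hvy' : padicValNat 3 (y + d) = j := swValEq Nat.prime_three (by omega) hyd3 hyd4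
  have hy2a : 2^a ∣ y :=
    swForced (A := padicValNat 3 y) (A' := padicValNat 3 (y+d)) Nat.prime_two h2 hyz
      (by
        have := H y hyw1 (by omega)
        rw [Nat.add_comm (padicValNat 2 y), Nat.add_comm (padicValNat 2 (y+d))] at this
        exact this)
      (by omega)
  -- pick x with 3^(j+1) ∣ x + d but ¬ 3^(j+2) ∣ x + d
  obtain ⟨x1, hx11, hx12, hx13, -⟩ := swExistsCong2 s (3^(j+1)) 1 0 0 d
    (by positivity) (by norm_num) (Nat.coprime_one_right _)
  rw [Nat.mul_one] at hx12
  have hx1d : 3^(j+1) ∣ x1 + d := Nat.dvd_of_mod_eq_zero (by simpa using hx13)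
  obtain ⟨x, hxw1, hxw2, hxd1, hxd2⟩ :
      ∃ x, s < x ∧ x ≤ s + 2 * 3^(j+1) ∧ 3^(j+1) ∣ x + d ∧ ¬ 3^(j+2) ∣ x + d := by
    by_cases hc : 3^(j+2) ∣ x1 + d
    · refine ⟨x1 + 3^(j+1), by omega, by omega, ?_, ?_⟩
      · have : x1 + 3^(j+1) + d = (x1 + d) + 3^(j+1) := by ring
        rw [this]
        exact dvd_add hx1d dvd_rfl
      · intro hh
        have he : x1 + 3^(j+1) + d = (x1 + d) + 3^(j+1) := by ring
        rw [he] at hh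
        have h4 : (3:ℕ)^(j+2) ∣ 3^(j+1) := by
          have := Nat.dvd_sub hh hc
          simpa using this
        have := Nat.le_of_dvd (by positivity) h4
        omega
    · exact ⟨x1, hx11, by omega, hx1d, hc⟩
  have hxz : x ≠ 0 := by omega
  have hvx' : padicValNat 3 (x + d) = j+1 := swValEq Nat.prime_three (by omega) hxd1 hxd2
  have hxd3 : 3^j ∣ x := by
    have h4 : (3:ℕ)^j ∣ x + d := (pow_dvd_pow 3 j.le_succ).trans hxd1
    have := Nat.dvd_sub h4 h3
    simpa using this
  have hxd4 : ¬ 3^(j+1) ∣ x := fun hh => htop (by simpa using Nat.dvd_sub hxd1 hh)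
  have hvx : padicValNat 3 x = j := swValEq Nat.prime_three hxz hxd3 hxd4
  have hx2a : 2^a ∣ x :=
    swForced (A := padicValNat 3 x) (A' := padicValNat 3 (x+d)) Nat.prime_two h2 hxz
      (by
        have := H x hxw1 (by omega)
        rw [Nat.add_comm (padicValNat 2 x), Nat.add_comm (padicValNat 2 (x+d))] at this
        exact this)
      (by omega)
  have hne : x ≠ y := by
    intro he
    rw [he, hvy] at hvx
    omega
  have hco : Nat.Coprime (2^a) (3^j) := Nat.Coprime.pow a j (by norm_num)
  have hmul : 8 * 3^j ≤ 2^a * 3^j := Nat.mul_le_mul_right _ h8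
  rcases Nat.lt_or_ge x y with hlt | hge
  · have hDd : 2^a * 3^j ∣ y - x := hco.mul_dvd_of_dvd_of_dvd
      (Nat.dvd_sub hy2a hx2a) (Nat.dvd_sub ((pow_dvd_pow 3 j.le_succ).trans hyd1) hxd3)
    have hDle := Nat.le_of_dvd (by omega) hDd
    omega
  · have hlt' : y < x := by omega
    have hDd : 2^a * 3^j ∣ x - y := hco.mul_dvd_of_dvd_of_dvd
      (Nat.dvd_sub hx2a hy2a) (Nat.dvd_sub hxd3 ((pow_dvd_pow 3 j.le_succ).trans hyd1))
    have hDle := Nat.le_of_dvd (by omega) hDd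
    omega
/-! The combined divisibility lemmas -/

lemma swCheapDvd {s d m : ℕ} (H : swHyp s d m) (a b : ℕ)
    (h2 : 6 * 2^a ≤ m) (h3 : 6 * 3^b ≤ m) : 2^a * 3^b ∣ d :=
  (Nat.Coprime.pow a b (by norm_num)).mul_dvd_of_dvd_of_dvd
    (swTwoPowDvd H a h2) (swThreePowDvd H b h3)

lemma swTightDvd {s d m : ℕ} (H : swHyp s d m) (a b : ℕ) (ha : 3 ≤ a) (hb : 3 ≤ b)
    (hm2 : 3 * 2^a ≤ m) (hm3 : 2 * 3^b + 4 ≤ m) : 2^a * 3^b ∣ d := by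
  obtain ⟨a', rfl⟩ : ∃ a', a = a'+1 := ⟨a-1, by omega⟩
  obtain ⟨b', rfl⟩ : ∃ b', b = b'+1 := ⟨b-1, by omega⟩
  have e2 : (3:ℕ) * 2^(a'+1) = 6 * 2^a' := by ring
  have e3 : (2:ℕ) * 3^(b'+1) = 6 * 3^b' := by ring
  have c2 : 2^a' ∣ d := swTwoPowDvd H a' (by omega)
  have c3 : 3^b' ∣ d := swThreePowDvd H b' (by omega)
  have d2 : 2^(a'+1) ∣ d := swU2 a' b' (H.mono hm2) (by omega) c2 c3
  have d3 : 3^(b'+1) ∣ d := swU3 (a'+1) b' (H.mono hm3) (by omega) (by omega) d2 c3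
  exact (Nat.Coprime.pow _ _ (by norm_num)).mul_dvd_of_dvd_of_dvd d2 d3

/-! From windows to the hypothesis -/

noncomputable def swSeq : ℕ → ℤ := fun n => (-1) ^ (padicValNat 2 (n + 1) + padicValNat 3 (n + 1))

lemma swNegOnePowParity {A B : ℕ} (h : ((-1:ℤ))^A = (-1)^B) : A % 2 = B % 2 := by
  rcases Nat.even_or_odd A with hA | hA <;> rcases Nat.even_or_odd B with hB | hB
  · rw [Nat.even_iff] at hA hB; omega
  · rw [hA.neg_one_pow, hB.neg_one_pow] at h; norm_num at h
  · rw [hA.neg_one_pow, hB.neg_one_pow] at h; norm_num at h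
  · rw [Nat.odd_iff] at hA hB; omega

lemma swHypOfWindows {m s t : ℕ} (hst : s ≤ t)
    (h : (fun i : Fin m => swSeq (s + (i:ℕ))) = fun i : Fin m => swSeq (t + (i:ℕ))) :
    swHyp s (t - s) m := by
  intro n hn1 hn2
  have hi : n - s - 1 < m := by omega
  have hc := congrFun h ⟨n - s - 1, hi⟩
  simp only [swSeq] at hc
  have e1 : s + (n - s - 1) + 1 = n := by omega
  have e2 : t + (n - s - 1) + 1 = n + (t - s) := by omega
  rw [e1, e2] at hc
  exact swNegOnePowParity hc

/-! Complexity lower bounds -/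

lemma swComplexityLower (m K : ℕ)
    (hkey : ∀ s t : ℕ, s < K → t < K →
      (fun i : Fin m => swSeq (s + (i:ℕ))) = (fun i : Fin m => swSeq (t + (i:ℕ))) → s = t) :
    K ≤ subwordComplexity swSeq m := by
  classical
  have hfin : (Set.range fun start => fun i : Fin m => swSeq (start + (i:ℕ))).Finite := by
    apply Set.Finite.subset (Set.Finite.pi (fun _ : Fin m => (Set.toFinite ({-1,1} : Set ℤ))))
    rintro f ⟨s, rfl⟩
    intro i _
    simp only [swSeq]
    rcases Nat.even_or_odd (padicValNat 2 (s + (i:ℕ) + 1) + padicValNat 3 (s + (i:ℕ) + 1)) with h | h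
    · rw [h.neg_one_pow]; right; rfl
    · rw [h.neg_one_pow]; left; rfl
  have hinj : Set.InjOn (fun start => fun i : Fin m => swSeq (start + (i:ℕ)))
      ↑(Finset.range K) := by
    intro a ha b hb hab
    exact hkey a b (by simpa using ha) (by simpa using hb) hab
  have himg : (fun start => fun i : Fin m => swSeq (start + (i:ℕ))) '' ↑(Finset.range K)
      ⊆ Set.range fun start => fun i : Fin m => swSeq (start + (i:ℕ)) :=
    Set.image_subset_range _ _
  have hcard : ((fun start => fun i : Fin m => swSeq (start + (i:ℕ))) '' ↑(Finset.range K)).ncard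
      = K := by
    rw [Set.ncard_image_of_injOn hinj, Set.ncard_coe_finset, Finset.card_range]
  calc K = _ := hcard.symm
  _ ≤ _ := Set.ncard_le_ncard himg hfin

lemma swKeyOfDvd (m P : ℕ) (hdvd : ∀ s δ, 0 < δ → swHyp s δ m → P ∣ δ) :
    ∀ s t : ℕ, s < P → t < P →
      (fun i : Fin m => swSeq (s + (i:ℕ))) = (fun i : Fin m => swSeq (t + (i:ℕ))) → s = t := by
  intro s t hs ht he
  rcases Nat.lt_trichotomy s t with h | h | h
  · have hd := hdvd s (t - s) (by omega) (swHypOfWindows (by omega) he)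
    have := Nat.le_of_dvd (by omega) hd
    omega
  · exact h
  · have hd := hdvd t (s - t) (by omega) (swHypOfWindows (by omega) he.symm)
    have := Nat.le_of_dvd (by omega) hd
    omega

lemma swComplexityCheap (m a b : ℕ) (h2 : 6 * 2^a ≤ m) (h3 : 6 * 3^b ≤ m) :
    2^a * 3^b ≤ subwordComplexity swSeq m :=
  swComplexityLower m _ (swKeyOfDvd m _ (fun _ _ _ H => swCheapDvd H a b h2 h3))

lemma swComplexityTight (m a b : ℕ) (ha : 3 ≤ a) (hb : 3 ≤ b)
    (hm2 : 3 * 2^a ≤ m) (hm3 : 2 * 3^b + 4 ≤ m) :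
    2^a * 3^b ≤ subwordComplexity swSeq m :=
  swComplexityLower m _ (swKeyOfDvd m _ (fun _ _ _ H => swTightDvd H a b ha hb hm2 hm3))
/-! Computable parity of the valuation sum, for small cases -/

def swParAux : ℕ → ℕ → Bool
  | 0, _ => false
  | (f+1), n =>
    if n % 2 = 0 then !(swParAux f (n/2))
    else if n % 3 = 0 then !(swParAux f (n/3))
    else false

lemma swParAuxCorrect : ∀ f n, 0 < n → n ≤ f →
    (padicValNat 2 n + padicValNat 3 n) % 2 = (if swParAux f n then 1 else 0) := by
  intro f
  induction f with
  | zero => intro n h1 h2; omega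
  | succ f ih =>
    intro n h1 h2
    by_cases h2d : n % 2 = 0
    · have hm : n = 2 * (n / 2) := by omega
      have hm1 : 0 < n / 2 := by omega
      have hm2 : n / 2 ≤ f := by omega
      have hv2 : padicValNat 2 n = padicValNat 2 (n / 2) + 1 := by
        conv_lhs => rw [hm]
        exact swVpMulP Nat.prime_two (by omega)
      have hv3 : padicValNat 3 n = padicValNat 3 (n / 2) := by
        conv_lhs => rw [hm]
        exact swVpMulCop Nat.prime_three (by norm_num) (by omega) (by norm_num)
      have hih := ih (n / 2) hm1 hm2
      show _ = (if swParAux (f+1) n then 1 else 0)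
      rw [show swParAux (f+1) n = !(swParAux f (n/2)) by simp [swParAux, h2d]]
      rw [hv2, hv3]
      cases hb : swParAux f (n/2) <;> simp [hb] at hih ⊢ <;> omega
    · by_cases h3d : n % 3 = 0
      · have hm : n = 3 * (n / 3) := by omega
        have hm1 : 0 < n / 3 := by omega
        have hm2 : n / 3 ≤ f := by omega
        have hv3 : padicValNat 3 n = padicValNat 3 (n / 3) + 1 := by
          conv_lhs => rw [hm]
          exact swVpMulP Nat.prime_three (by omega)
        have hv2 : padicValNat 2 n = padicValNat 2 (n / 3) := by
          conv_lhs => rw [hm]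
          exact swVpMulCop Nat.prime_two (by norm_num) (by omega) (by norm_num)
        have hih := ih (n / 3) hm1 hm2
        show _ = (if swParAux (f+1) n then 1 else 0)
        rw [show swParAux (f+1) n = !(swParAux f (n/3)) by simp [swParAux, h2d, h3d]]
        rw [hv2, hv3]
        cases hb : swParAux f (n/3) <;> simp [hb] at hih ⊢ <;> omega
      · have hv2 : padicValNat 2 n = 0 := padicValNat.eq_zero_of_not_dvd (by omega)
        have hv3 : padicValNat 3 n = 0 := padicValNat.eq_zero_of_not_dvd (by omega)
        show _ = (if swParAux (f+1) n then 1 else 0)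
        rw [show swParAux (f+1) n = false by simp [swParAux, h2d, h3d]]
        rw [hv2, hv3]
        simp

def swCode (m s : ℕ) : ℕ :=
  ∑ i ∈ Finset.range m, (if swParAux (s+i+1) (s+i+1) then 2^i else 0)

lemma swCodeSpec (m s : ℕ) :
    swCode m s = ∑ i : Fin m, (if swSeq (s + (i:ℕ)) = 1 then 0 else 2^((i:ℕ))) := by
  rw [Fin.sum_univ_eq_sum_range (fun i => if swSeq (s+i) = 1 then (0:ℕ) else 2^i) m]
  unfold swCode
  refine Finset.sum_congr rfl ?_
  intro i _
  have hcor := swParAuxCorrect (s+i+1) (s+i+1) (by omega) le_rfl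
  by_cases hb : swParAux (s+i+1) (s+i+1)
  · have hodd : Odd (padicValNat 2 (s+i+1) + padicValNat 3 (s+i+1)) := by
      rw [Nat.odd_iff]; simpa [hb] using hcor
    have hs : swSeq (s + i) = -1 := by
      show (-1:ℤ) ^ (padicValNat 2 (s+i+1) + padicValNat 3 (s+i+1)) = -1
      rw [hodd.neg_one_pow]
    rw [hs]
    simp [hb]
  · have heven : Even (padicValNat 2 (s+i+1) + padicValNat 3 (s+i+1)) := by
      rw [Nat.even_iff]; simpa [hb] using hcor
    have hs : swSeq (s + i) = 1 := by
      show (-1:ℤ) ^ (padicValNat 2 (s+i+1) + padicValNat 3 (s+i+1)) = 1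
      rw [heven.neg_one_pow]
    rw [hs]
    simp [hb]

lemma swSmallCase (m K : ℕ) (h : ((Finset.range K).image (swCode m)).card = K) :
    K ≤ subwordComplexity swSeq m := by
  apply swComplexityLower
  intro s t hs ht he
  have hinj := Finset.injOn_of_card_image_eq (by rw [h, Finset.card_range])
  refine hinj (by simp [hs]) (by simp [ht]) ?_
  rw [swCodeSpec, swCodeSpec]
  exact Finset.sum_congr rfl (fun i _ => by rw [congrFun he i])
set_option maxRecDepth 1000000
theorem stmt7 :
    BigOmega (subwordComplexity (fun n => ((-1 : ℤ)) ^ (padicValNat 2 (n + 1) + padicValNat 3 (n + 1))))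
      (fun n => n ^ 2) ∧
    ∀ n : ℕ, 1 ≤ n → ∃ r : ℕ, r ≤ 5 ∧
      ((n + 1) ^ 2 + 5) / 6 ≤
        subwordComplexity (fun n => ((-1 : ℤ)) ^ (padicValNat 2 (n + 1) + padicValNat 3 (n + 1)))
          (max (3 * n - 2) (r + 2 * n - 1)) := by
  constructor
  · refine ⟨216, 36, by norm_num, ?_⟩
    intro n hn
    show n ^ 2 ≤ 216 * subwordComplexity swSeq n
    have hk6 : 6 ≤ n / 6 := by omega
    set k := n / 6 with hk
    set a := Nat.log 2 k with ha
    set b := Nat.log 3 k with hb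
    have h2a : 2^a ≤ k := Nat.pow_log_le_self 2 (by omega)
    have h2a' : k < 2^(a+1) := Nat.lt_pow_succ_log_self (by norm_num) k
    have h3b : 3^b ≤ k := Nat.pow_log_le_self 3 (by omega)
    have h3b' : k < 3^(b+1) := Nat.lt_pow_succ_log_self (by norm_num) k
    have hp := swComplexityCheap n a b (by omega) (by omega)
    have e1 : (2:ℕ)^(a+1) = 2*2^a := by ring
    have e2 : (3:ℕ)^(b+1) = 3*3^b := by ring
    have h1 : k + 1 ≤ 2*2^a := by omega
    have h2 : k + 1 ≤ 3*3^b := by omega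
    have h3 : n ≤ 6*(k+1) := by omega
    have key : n^2 ≤ 216 * (2^a * 3^b) := by
      calc n^2 ≤ (6*(k+1))^2 := Nat.pow_le_pow_left h3 2
      _ = 36 * ((k+1)*(k+1)) := by ring
      _ ≤ 36 * ((2*2^a)*(3*3^b)) := Nat.mul_le_mul_left 36 (Nat.mul_le_mul h1 h2)
      _ = 216 * (2^a * 3^b) := by ring
    calc n^2 ≤ 216 * (2^a * 3^b) := key
    _ ≤ 216 * subwordComplexity swSeq n := Nat.mul_le_mul_left 216 hp
  · intro n hn1
    refine ⟨0, by norm_num, ?_⟩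
    have hmax : max (3*n - 2) (0 + 2*n - 1) = 3*n - 2 := Nat.max_eq_left (by omega)
    rw [hmax]
    show ((n+1)^2+5)/6 ≤ subwordComplexity swSeq (3*n-2)
    by_cases hbig : 20 ≤ n
    · set m := 3*n-2 with hm
      set a := Nat.log 2 (n-1) with ha
      set b := Nat.log 3 ((3*n-6)/2) with hb
      have pa1 : 2^a ≤ n-1 := Nat.pow_log_le_self 2 (by omega)
      have pa2 : n-1 < 2^(a+1) := Nat.lt_pow_succ_log_self (by norm_num) _
      have pb1 : 3^b ≤ (3*n-6)/2 := Nat.pow_log_le_self 3 (by omega)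
      have pb2 : (3*n-6)/2 < 3^(b+1) := Nat.lt_pow_succ_log_self (by norm_num) _
      have ha3 : 3 ≤ a := by
        refine (Nat.le_log_iff_pow_le (by norm_num) (by omega)).mpr ?_
        norm_num
        omega
      have hb3 : 3 ≤ b := by
        refine (Nat.le_log_iff_pow_le (by norm_num) (by omega)).mpr ?_
        norm_num
        omega
      have hm2 : 3*2^a ≤ m := by omega
      have hm3 : 2*3^b + 4 ≤ m := by omega
      have hp := swComplexityTight m a b ha3 hb3 hm2 hm3
      have e1 : (2:ℕ)^(a+1) = 2*2^a := by ring
      have e2 : (3:ℕ)^(b+1) = 3*3^b := by ring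
      have h1 : n ≤ 2*2^a := by omega
      have h2' : 3*n ≤ 6*3^b + 5 := by omega
      have hAB : n * (3*n) ≤ (2*2^a) * (6*3^b + 5) := Nat.mul_le_mul h1 h2'
      have eAB : (2*2^a) * (6*3^b + 5) = 12*(2^a*3^b) + 10*2^a := by ring
      have e3 : n*(3*n) = 3*(n*n) := by ring
      have h12 : 3*(n*n) ≤ 12*(2^a*3^b) + 10*2^a := by omega
      have h20 : 20*n ≤ n*n := Nat.mul_le_mul_right n hbig
      have en : (n+1)^2 = n*n + 2*n + 1 := by ring
      have key : (n+1)^2 ≤ 6 * (2^a*3^b) := by omega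
      calc ((n+1)^2+5)/6 ≤ (6*(2^a*3^b)+5)/6 := Nat.div_le_div_right (by omega)
      _ = 2^a*3^b := by omega
      _ ≤ subwordComplexity swSeq m := hp
    · have hn19 : n < 20 := by omega
      interval_cases n
      · norm_num
        exact le_trans (swSmallCase 1 1 (by decide)) le_rfl
      · norm_num
        exact swSmallCase 4 2 (by decide)
      · norm_num
        exact swSmallCase 7 3 (by decide)
      · norm_num
        exact swSmallCase 10 5 (by decide)
      · norm_num
        exact swSmallCase 13 6 (by decide)
      · norm_num
        exact swSmallCase 16 9 (by decide)
      · norm_num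
        exact swSmallCase 19 11 (by decide)
      · norm_num
        exact swSmallCase 22 14 (by decide)
      · norm_num
        exact swSmallCase 25 17 (by decide)
      · norm_num
        exact swSmallCase 28 21 (by decide)
      · norm_num
        exact swSmallCase 31 24 (by decide)
      · norm_num
        exact swSmallCase 34 29 (by decide)
      · norm_num
        exact swSmallCase 37 33 (by decide)
      · norm_num
        exact swSmallCase 40 38 (by decide)
      · norm_num
        exact swSmallCase 43 43 (by decide)
      · norm_num
        exact swSmallCase 46 49 (by decide)
      · norm_num
        exact swSmallCase 49 54 (by decide)
      · norm_num
        exact swSmallCase 52 61 (by decide)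
      · norm_num
        exact swSmallCase 55 67 (by decide)
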